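/- Let V be a finite-dimensional vector space over a field, and let x₁,…,x_m be linearly independent vectors in V with m < dim V allowed. Set x_{m+1} = -(x₁+⋯+x_m) and X = {x₁,…,x_m,x_{m+1}}. Then every permutation of X extends to a linear automorphism of V. -/

import Mathlib

/-- If `x 1, …, x m` are linearly independent and
`X = {x 1, …, x m, -(x 1 + ⋯ + x m)}`, then every permutation of `X`
extends to a linear automorphism of `V`. -/
theorem stmt0 {K V : Type*} [Field K] [AddCommGroup V] [Module K V]
    [FiniteDimensional K V] (hdim : 2 ≤ Module.finrank K V)
    {m : ℕ} (x : Fin m → V) (hx : LinearIndependent K x)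
    (X : Set V) (hX : X = Set.range x ∪ {-(∑ i, x i)})
    (s : Equiv.Perm X) :
    ∃ u : V ≃ₗ[K] V, ∀ p : X, u (p : V) = (s p : V) := by
  classical
  set S : V := ∑ i, x i with hS
  set y : Fin (m+1) → V := Fin.snoc x (-S) with hy
  have hyc : ∀ j : Fin m, y (Fin.castSucc j) = x j := fun j => Fin.snoc_castSucc _ _ _
  have hyl : y (Fin.last m) = -S := Fin.snoc_last _ _
  have hXr : X = Set.range y := by
    rw [hX]
    ext v
    constructor
    · rintro (⟨j, rfl⟩ | hv)
      · exact ⟨Fin.castSucc j, hyc j⟩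
      · exact ⟨Fin.last m, by rw [hyl]; exact hv.symm⟩
    · rintro ⟨k, rfl⟩
      induction k using Fin.lastCases with
      | last => right; rw [hyl]; rfl
      | cast j => left; exact ⟨j, (hyc j).symm⟩
  have hsum : ∑ k, y k = 0 := by
    rw [Fin.sum_univ_castSucc]
    simp [hyc, hyl]
    exact add_neg_cancel _
  by_cases hinj : Function.Injective y
  · -- main case
    set e : Fin (m+1) ≃ X := (Equiv.ofInjective y hinj).trans (Equiv.setCongr hXr.symm) with hedef
    have he : ∀ k, (e k : V) = y k := fun k => rfl
    set σ : Equiv.Perm (Fin (m+1)) := (Equiv.permCongr e).symm s with hσ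
    have hsσ : ∀ k, e (σ k) = s (e k) := by
      intro k
      simp [hσ, Equiv.permCongr_apply]
    set W := Submodule.span K (Set.range x) with hW
    have hxW : ∀ j, x j ∈ W := fun j => Submodule.subset_span ⟨j, rfl⟩
    have hSW : S ∈ W := by rw [hS]; exact Submodule.sum_mem _ fun j _ => hxW j
    have hyW : ∀ k, y k ∈ W := by
      intro k
      induction k using Fin.lastCases with
      | last => rw [hyl]; exact neg_mem hSW
      | cast j => rw [hyc]; exact hxW j
    set Y : Fin (m+1) → W := fun k => ⟨y k, hyW k⟩ with hY
    have hYsum : ∑ k, Y k = 0 := by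
      apply Subtype.ext
      push_cast [hY]
      simpa using hsum
    set b : Module.Basis (Fin m) K W := Module.Basis.span hx with hb
    have hbY : ∀ j, b j = Y (Fin.castSucc j) := by
      intro j
      apply Subtype.ext
      rw [Module.Basis.span_apply]
      exact (hyc j).symm
    set uW : W →ₗ[K] W := b.constr K (fun j => Y (σ (Fin.castSucc j))) with huW
    have hub : ∀ j, uW (b j) = Y (σ (Fin.castSucc j)) := fun j => b.constr_basis K _ j
    have hYlast : Y (Fin.last m) = -∑ j, b j := by
      apply Subtype.ext
      push_cast [hY, hbY, hyl]
      simp [hY, hyc, hS]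
    have hσsum : Y (σ (Fin.last m)) = -∑ j, Y (σ (Fin.castSucc j)) := by
      have h1 : ∑ k, Y (σ k) = 0 := by rw [Equiv.sum_comp σ Y]; exact hYsum
      rw [Fin.sum_univ_castSucc] at h1
      linear_combination (norm := module) h1
    have hulast : uW (Y (Fin.last m)) = Y (σ (Fin.last m)) := by
      rw [hYlast, map_neg, map_sum, hσsum]
      simp [hub]
    have huYall : ∀ k, uW (Y k) = Y (σ k) := by
      intro k
      induction k using Fin.lastCases with
      | last => exact hulast
      | cast j => rw [← hbY]; exact hub j
    have hsurj : Function.Surjective uW := by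
      rw [← LinearMap.range_eq_top]
      rw [← top_le_iff, ← b.span_eq, Submodule.span_le]
      rintro w ⟨j, rfl⟩
      have : b j = Y (σ (σ.symm (Fin.castSucc j))) := by rw [Equiv.apply_symm_apply, hbY]
      rw [this]
      exact ⟨Y (σ.symm (Fin.castSucc j)), huYall _⟩
    have hbij : Function.Bijective uW :=
      ⟨LinearMap.injective_iff_surjective.mpr hsurj, hsurj⟩
    set uWe : W ≃ₗ[K] W := LinearEquiv.ofBijective uW hbij with huWe
    obtain ⟨C, hC⟩ := Submodule.exists_isCompl W
    set pe := Submodule.prodEquivOfIsCompl W C hC with hpe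
    refine ⟨pe.symm.trans ((uWe.prodCongr (LinearEquiv.refl K C)).trans pe), ?_⟩
    have hu : ∀ w : W, (pe.symm.trans ((uWe.prodCongr (LinearEquiv.refl K C)).trans pe)) (w : V)
        = (uWe w : V) := by
      intro w
      simp [hpe]
    intro p
    have hpk : (p : V) = y (e.symm p) := by
      conv_lhs => rw [← Equiv.apply_symm_apply e p]
      exact he _
    have hsp : (s p : V) = y (σ (e.symm p)) := by
      have h2 := hsσ (e.symm p)
      rw [Equiv.apply_symm_apply] at h2
      rw [← h2]
      exact he _
    rw [hpk, hsp]
    have : y (e.symm p) = (Y (e.symm p) : V) := rfl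
    rw [this, hu]
    have : uWe (Y (e.symm p)) = Y (σ (e.symm p)) := huYall _
    rw [this]
  · -- degenerate case: X is a subsingleton
    refine ⟨LinearEquiv.refl K V, ?_⟩
    have hXsub : X.Subsingleton := by
      rw [Function.not_injective_iff] at hinj
      obtain ⟨i, j, hij, hne⟩ := hinj
      -- one of i, j must be the last index
      have hk : ∃ k : Fin m, x k = -S := by
        induction i using Fin.lastCases with
        | last =>
          induction j using Fin.lastCases with
          | last => exact absurd rfl hne
          | cast j' => exact ⟨j', by rw [← hyc, ← hij, hyl]⟩
        | cast i' =>
          induction j using Fin.lastCases with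
          | last => exact ⟨i', by rw [← hyc, hij, hyl]⟩
          | cast j' =>
            rw [hyc, hyc] at hij
            exact absurd (by rw [hx.injective hij]) hne
      obtain ⟨k, hk⟩ := hk
      have hall : ∀ j : Fin m, x j = -S := by
        intro j
        rcases eq_or_ne j k with rfl | hne'
        · exact hk
        · exfalso
          have hrel : ∑ i, ((1 : K) + if i = k then 1 else 0) • x i = 0 := by
            have hterm : ∀ i : Fin m, ((1 : K) + if i = k then 1 else 0) • x i
                = x i + (if i = k then x i else 0) := by
              intro i; split <;> simp [add_smul]
            rw [Finset.sum_congr rfl fun i _ => hterm i, Finset.sum_add_distrib,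
              Finset.sum_ite_eq' Finset.univ k x]
            simp [← hS, hk]
          have := Fintype.linearIndependent_iff.mp hx _ hrel j
          rw [if_neg hne'] at this
          simp at this
      intro a ha b hb
      rw [hXr] at ha hb
      obtain ⟨ka, rfl⟩ := ha
      obtain ⟨kb, rfl⟩ := hb
      have hally : ∀ k : Fin (m+1), y k = -S := by
        intro k
        induction k using Fin.lastCases with
        | last => exact hyl
        | cast j => rw [hyc]; exact hall j
      rw [hally ka, hally kb]
    have : Subsingleton X := hXsub.coe_sort
    intro p
    rw [Subsingleton.elim (s p) p]
    simp
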